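/- Let G = ([n], E) be a graph and consider the max-min pricing instance with marginals F_1(G),...,F_n(G) defined from G. If M is a maximum independent set of G, then the optimal robust revenue guarantee satisfies R*(G) ≤ (|M| + 2)·√n + 3n·2^{-n}. -/

import Mathlib

open MeasureTheory
open scoped ENNReal NNReal

noncomputable section

/-- A buyer's purchase rule for `n` items: given a valuation profile and a vector of item prices
(in `[0,∞]`), `choose` returns the purchased item (or `none` if nothing is purchased).
The axioms say: a purchased item has a finite price and yields nonnegative utility
(`feasible`), the purchased item maximizes utility among all items (`optimal`), and the buyer
does purchase whenever some item yields nonnegative utility (`active`). Ties among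
utility-maximizing items are broken according to the (fixed) rule embodied by `choose`. -/
structure BuyerRule (n : ℕ) where
  choose : (Fin n → ℝ) → (Fin n → ℝ≥0∞) → Option (Fin n)
  feasible : ∀ v p j, choose v p = some j → p j ≠ ⊤ ∧ (p j).toReal ≤ v j
  optimal : ∀ v p j k, choose v p = some j → p k ≠ ⊤ →
      v k - (p k).toReal ≤ v j - (p j).toReal
  active : ∀ v p, (∃ k, p k ≠ ⊤ ∧ (p k).toReal ≤ v k) → (choose v p).isSome = true

/-- The seller's revenue from valuation profile `v` under pricing `p`. -/
def BuyerRule.revenue {n : ℕ} (B : BuyerRule n) (p : Fin n → ℝ≥0∞) (v : Fin n → ℝ) : ℝ≥0∞ :=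
  (B.choose v p).elim 0 (fun j => p j)

/-- A joint distribution `F` on valuation profiles is compatible with the marginals `marg`
if it is a probability measure whose `j`-th one-dimensional marginal is `marg j` for every `j`. -/
def Compatible {n : ℕ} (marg : Fin n → Measure ℝ) (F : Measure (Fin n → ℝ)) : Prop :=
  IsProbabilityMeasure F ∧ ∀ j, F.map (fun v => v j) = marg j

/-- `R(p,F)`: the expected revenue of pricing `p` under joint distribution `F`. -/
def expRev {n : ℕ} (B : BuyerRule n) (p : Fin n → ℝ≥0∞) (F : Measure (Fin n → ℝ)) : ℝ≥0∞ :=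
  ∫⁻ v, B.revenue p v ∂F

/-- `R(p)`: the robust revenue guarantee of `p`, the infimum of `R(p,F)` over compatible `F`. -/
def robustRev {n : ℕ} (B : BuyerRule n) (marg : Fin n → Measure ℝ) (p : Fin n → ℝ≥0∞) : ℝ≥0∞ :=
  ⨅ (F : Measure (Fin n → ℝ)) (_ : Compatible marg F), expRev B p F

/-- `R*`: the optimal robust revenue guarantee over all pricings. -/
def optRobust {n : ℕ} (B : BuyerRule n) (marg : Fin n → Measure ℝ) : ℝ≥0∞ :=
  ⨆ p : Fin n → ℝ≥0∞, robustRev B marg p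

/-- The marginal distribution `F_i(G)` of the hardness instance built from the graph `G`
(item `i : Fin n` represents the vertex `i+1 ∈ [n]` of the paper): it takes the value
`2^((i+1)·n)` with probability `2^(-(i+1)·n)`; additionally, for each vertex `j > i` adjacent
to `i`, it takes the value `2^((j+1)·n)` with probability `2^(-(j+1)·n)/√n`; with all remaining
probability it takes the value `0`. -/
def margG (n : ℕ) (G : SimpleGraph (Fin n)) [DecidableRel G.Adj] (i : Fin n) : Measure ℝ :=
  ENNReal.ofReal (((2 : ℝ) ^ (((i : ℕ) + 1) * n))⁻¹) •
      Measure.dirac ((2 : ℝ) ^ (((i : ℕ) + 1) * n))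
    + (∑ j : Fin n,
        if i < j ∧ G.Adj i j then
          ENNReal.ofReal ((((2 : ℝ) ^ (((j : ℕ) + 1) * n))⁻¹) / Real.sqrt n) •
            Measure.dirac ((2 : ℝ) ^ (((j : ℕ) + 1) * n))
        else 0)
    + (1 - ENNReal.ofReal (((2 : ℝ) ^ (((i : ℕ) + 1) * n))⁻¹)
        - ∑ j : Fin n,
            if i < j ∧ G.Adj i j then
              ENNReal.ofReal ((((2 : ℝ) ^ (((j : ℕ) + 1) * n))⁻¹) / Real.sqrt n)
            else 0) •
        Measure.dirac (0 : ℝ)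

namespace RobAux

/-- map of a finite sum of measures -/
lemma map_finset_sum {ι α β : Type*} [MeasurableSpace α] [MeasurableSpace β]
    (s : Finset ι) (μ : ι → Measure α) {f : α → β} (hf : Measurable f) :
    (∑ i ∈ s, μ i).map f = ∑ i ∈ s, (μ i).map f := by
  induction s using Finset.cons_induction with
  | empty => simp
  | cons a s ha ih => rw [Finset.sum_cons, Finset.sum_cons, Measure.map_add _ _ hf, ih]

variable (n : ℕ) (G : SimpleGraph (Fin n)) [DecidableRel G.Adj] (p : Fin n → ℝ≥0∞)

def w (k : ℕ) : ℝ := 2 ^ ((k + 1) * n)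

lemma w_pos (k : ℕ) : 0 < w n k := by unfold w; positivity

lemma w_inv_nonneg (k : ℕ) : 0 ≤ (w n k)⁻¹ := by unfold w; positivity

def sf : ℝ := (Real.sqrt n)⁻¹

lemma sf_nonneg : 0 ≤ sf n := by unfold sf; positivity

lemma sqrt_n {m : ℕ} (hnm : n = m * m) : Real.sqrt n = m := by
  subst hnm; push_cast; exact Real.sqrt_mul_self (by positivity)

lemma m_sf {m : ℕ} (hm : 0 < m) (hnm : n = m * m) : (m : ℝ) * sf n = 1 := by
  rw [sf, sqrt_n n hnm]
  field_simp

lemma sf_le_one {m : ℕ} (hm : 0 < m) (hnm : n = m * m) : sf n ≤ 1 := by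
  have h := m_sf n hm hnm
  have h1 : (1:ℝ) ≤ m := by exact_mod_cast hm
  nlinarith [sf_nonneg n]

lemma sum_w_inv_le_one (hn : 0 < n) : ∑ j : Fin n, (w n j)⁻¹ ≤ 1 := by
  have h1 : ∀ j : Fin n, (w n j)⁻¹ ≤ (1/2 : ℝ) ^ ((j : ℕ) + 1) := by
    intro j
    rw [w, div_pow, one_pow, one_div]
    apply inv_anti₀ (by positivity)
    apply pow_le_pow_right₀ one_le_two
    nlinarith [j.2, Nat.one_le_iff_ne_zero.mpr hn.ne']
  calc ∑ j : Fin n, (w n j)⁻¹ ≤ ∑ j : Fin n, (1/2:ℝ)^((j:ℕ)+1) :=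
        Finset.sum_le_sum (fun j _ => h1 j)
    _ = ∑ k ∈ Finset.range n, (1/2:ℝ)^(k+1) := by rw [Finset.sum_range fun k => (1/2:ℝ)^(k+1)]
    _ = (1/2) * ∑ k ∈ Finset.range n, (1/2:ℝ)^k := by rw [Finset.mul_sum]; congr 1; ext k; ring
    _ ≤ (1/2) * 2 := by
        have := sum_geometric_two_le n
        have h2 : ∑ k ∈ Finset.range n, (1/2:ℝ)^k = ∑ k ∈ Finset.range n, ((1:ℝ)/2^k) := by
          congr 1; ext k; rw [div_pow, one_pow]
        rw [h2]; linarith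
    _ = 1 := by norm_num

lemma sum_w_inv_nonneg : 0 ≤ ∑ j : Fin n, (w n j)⁻¹ :=
  Finset.sum_nonneg (fun j _ => w_inv_nonneg n j)

lemma w_le {i j : ℕ} (hij : i < j) : w n i ≤ w n j * ((2:ℝ)^n)⁻¹ := by
  have h : w n j * ((2:ℝ)^n)⁻¹ = 2 ^ (j * n) := by
    rw [w, add_mul, one_mul, pow_add]; field_simp
  rw [h, w]
  apply pow_le_pow_right₀ one_le_two
  exact Nat.mul_le_mul_right n hij

def prof (j : Fin n) (S : Finset (Fin n)) : Fin n → ℝ :=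
  fun k => if k = j ∨ k ∈ S then w n j else 0

def Nb (j : Fin n) : Finset (Fin n) := Finset.univ.filter (fun i => i < j ∧ G.Adj i j)

lemma mem_Nb {j i : Fin n} : i ∈ Nb n G j ↔ i < j ∧ G.Adj i j := by simp [Nb]

lemma Nb_ne {j i : Fin n} (h : i ∈ Nb n G j) : i ≠ j :=
  fun he => absurd ((mem_Nb n G).mp h).1 (he ▸ lt_irrefl _)

def low : Finset (Fin n) := Finset.univ.filter (fun i => p i ≤ ENNReal.ofReal (w n i))

lemma mem_low {i : Fin n} : i ∈ low n p ↔ p i ≤ ENNReal.ofReal (w n i) := by simp [low]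

def Lam (j : Fin n) : Finset (Fin n) := Nb n G j ∩ low n p

variable (m : ℕ)

lemma Lam'_ex (j : Fin n) : ∃ t ⊆ Lam n G p j, t.card = min (Lam n G p j).card m :=
  Finset.exists_subset_card_eq (min_le_left _ _)

def Lam' (j : Fin n) : Finset (Fin n) := Classical.choose (Lam'_ex n G p m j)

lemma Lam'_subset (j : Fin n) : Lam' n G p m j ⊆ Lam n G p j :=
  (Classical.choose_spec (Lam'_ex n G p m j)).1

lemma Lam'_card (j : Fin n) : (Lam' n G p m j).card = min (Lam n G p j).card m :=
  (Classical.choose_spec (Lam'_ex n G p m j)).2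

def fst (j : Fin n) : Fin n :=
  if h : (Lam' n G p m j).Nonempty then (Lam' n G p m j).min' h else j

def smalls (j : Fin n) : Finset (Fin n) := (Lam' n G p m j).erase (fst n G p m j)

def big (j : Fin n) : Finset (Fin n) := Nb n G j \ smalls n G p m j

lemma smalls_subset (j : Fin n) : smalls n G p m j ⊆ Lam n G p j :=
  (Finset.erase_subset _ _).trans (Lam'_subset n G p m j)

lemma smalls_subset_Nb (j : Fin n) : smalls n G p m j ⊆ Nb n G j :=
  (smalls_subset n G p m j).trans Finset.inter_subset_left

lemma big_subset_Nb (j : Fin n) : big n G p m j ⊆ Nb n G j := Finset.sdiff_subset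

lemma smalls_card_lt (hm : 0 < m) (j : Fin n) : (smalls n G p m j).card + 1 ≤ m := by
  rcases (Lam' n G p m j).eq_empty_or_nonempty with h | h
  · simp [smalls, h]; omega
  · have h1 : fst n G p m j ∈ Lam' n G p m j := by
      rw [fst, dif_pos h]; exact Finset.min'_mem _ h
    have hce := Finset.card_erase_of_mem h1
    have h2 := Lam'_card n G p m j
    have h3 : 1 ≤ (Lam' n G p m j).card := Finset.card_pos.mpr h
    rw [smalls, hce, h2]
    have := min_le_right (Lam n G p j).card m
    omega

lemma fst_mem_big (j : Fin n) (h : (Lam' n G p m j).Nonempty) :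
    fst n G p m j ∈ big n G p m j := by
  have h1 : fst n G p m j ∈ Lam' n G p m j := by
    rw [fst, dif_pos h]; exact Finset.min'_mem _ h
  have h2 : fst n G p m j ∈ Lam n G p j := Lam'_subset n G p m j h1
  exact Finset.mem_sdiff.mpr ⟨(Finset.mem_inter.mp h2).1, Finset.notMem_erase _ _⟩

lemma fst_low (j : Fin n) (h : (Lam' n G p m j).Nonempty) :
    fst n G p m j ∈ low n p := by
  have h1 : fst n G p m j ∈ Lam' n G p m j := by
    rw [fst, dif_pos h]; exact Finset.min'_mem _ h
  have h2 : fst n G p m j ∈ Lam n G p j := Lam'_subset n G p m j h1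
  exact (Finset.mem_inter.mp h2).2

/-! ### coefficients and the adversarial measure -/

def cb (j : ℕ) : ℝ := (w n j)⁻¹ * sf n

lemma cb_nonneg (j : ℕ) : 0 ≤ cb n j := mul_nonneg (w_inv_nonneg n j) (sf_nonneg n)

def cres (j : Fin n) : ℝ := (w n (j:ℕ))⁻¹ * (1 - ((smalls n G p m j).card + 1) * sf n)

lemma cres_nonneg {j : Fin n} (hm : 0 < m) (hnm : n = m * m) : 0 ≤ cres n G p m j := by
  apply mul_nonneg (w_inv_nonneg n _)
  have h1 := smalls_card_lt n G p m hm j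
  have h2 : (((smalls n G p m j).card + 1 : ℕ) : ℝ) * sf n ≤ (m:ℝ) * sf n := by
    apply mul_le_mul_of_nonneg_right _ (sf_nonneg n)
    exact_mod_cast h1
  have h3 := m_sf n hm hnm
  push_cast at h2
  linarith

def zc : ℝ := 1 - ∑ j : Fin n, (w n (j:ℕ))⁻¹

lemma zc_nonneg (hn : 0 < n) : 0 ≤ zc n := by
  have := sum_w_inv_le_one n hn
  rw [zc]; linarith

def blockM (j : Fin n) : Measure (Fin n → ℝ) :=
  ENNReal.ofReal (cb n (j:ℕ)) • Measure.dirac (prof n j (big n G p m j))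
  + (∑ i ∈ smalls n G p m j, ENNReal.ofReal (cb n (j:ℕ)) • Measure.dirac (prof n j {i}))
  + ENNReal.ofReal (cres n G p m j) • Measure.dirac (prof n j ∅)

def FF : Measure (Fin n → ℝ) :=
  (∑ j, blockM n G p m j) + ENNReal.ofReal (zc n) • Measure.dirac (fun _ => 0)


/-! ### the marginal of a block -/

def ezc (i j : Fin n) : ℝ :=
  if i = j then 0 else if i ∈ Nb n G j then (w n (j:ℕ))⁻¹ - cb n (j:ℕ) else (w n (j:ℕ))⁻¹

lemma ezc_nonneg {m : ℕ} (hm : 0 < m) (hnm : n = m * m) (i j : Fin n) : 0 ≤ ezc n G i j := by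
  rw [ezc]
  split
  · exact le_refl 0
  · split
    · rw [cb]
      have h1 := sf_le_one n hm hnm
      have h2 := w_inv_nonneg n (j:ℕ)
      nlinarith
    · exact w_inv_nonneg n (j:ℕ)

lemma blockM_map (hm : 0 < m) (hnm : n = m * m) (i j : Fin n) :
    (blockM n G p m j).map (fun v => v i) =
      (if i = j then ENNReal.ofReal ((w n (j:ℕ))⁻¹) • Measure.dirac (w n (j:ℕ)) else 0)
      + (if i ∈ Nb n G j then ENNReal.ofReal (cb n (j:ℕ)) • Measure.dirac (w n (j:ℕ)) else 0)
      + ENNReal.ofReal (ezc n G i j) • Measure.dirac (0:ℝ) := by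
  have hev : Measurable (fun v : Fin n → ℝ => v i) := measurable_pi_apply i
  have hmap : ∀ (c : ℝ≥0∞) (x : Fin n → ℝ),
      (c • Measure.dirac x).map (fun v => v i) = c • Measure.dirac (x i) := by
    intro c x
    rw [Measure.map_smul, Measure.map_dirac' hev]
  rw [blockM, Measure.map_add _ _ hev, Measure.map_add _ _ hev, map_finset_sum _ _ hev,
    hmap, hmap, Finset.sum_congr rfl (fun i' _ => hmap _ _)]
  have hcres := cres_nonneg n G p m (j := j) hm hnm
  have hcb := cb_nonneg n (j:ℕ)
  by_cases hij : i = j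
  · subst hij
    have hNb : i ∉ Nb n G i := fun h => Nb_ne n G h rfl
    rw [if_pos rfl, if_neg hNb, ezc, if_pos rfl]
    simp only [ENNReal.ofReal_zero, zero_smul, add_zero]
    have e1 : prof n i (big n G p m i) i = w n (i:ℕ) := if_pos (Or.inl rfl)
    have e3 : prof n i (∅ : Finset (Fin n)) i = w n (i:ℕ) := if_pos (Or.inl rfl)
    rw [e1, e3, Finset.sum_congr rfl (fun i' _ => by
      rw [show prof n i {i'} i = w n (i:ℕ) from if_pos (Or.inl rfl)])]
    rw [Finset.sum_const, ← Nat.cast_smul_eq_nsmul ℝ≥0∞, smul_smul,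
      show ((smalls n G p m i).card : ℝ≥0∞) * ENNReal.ofReal (cb n (i:ℕ))
        = ENNReal.ofReal ((smalls n G p m i).card * cb n (i:ℕ)) by
          rw [ENNReal.ofReal_mul (by positivity), ENNReal.ofReal_natCast]]
    have hco : ENNReal.ofReal ((w n (i:ℕ))⁻¹)
        = ENNReal.ofReal (cb n (i:ℕ)) + ENNReal.ofReal ((smalls n G p m i).card * cb n (i:ℕ))
          + ENNReal.ofReal (cres n G p m i) := by
      rw [← ENNReal.ofReal_add hcb (mul_nonneg (by positivity) hcb),
        ← ENNReal.ofReal_add (by positivity) hcres]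
      congr 1
      rw [cb, cres]
      push_cast
      ring
    rw [hco, add_smul, add_smul]
  · rw [if_neg hij]
    have e3 : prof n j (∅ : Finset (Fin n)) i = 0 := if_neg (by simp [hij])
    rw [e3]
    by_cases hiN : i ∈ Nb n G j
    · rw [if_pos hiN, ezc, if_neg hij, if_pos hiN]
      by_cases his : i ∈ smalls n G p m j
      · have e1 : prof n j (big n G p m j) i = 0 := by
          apply if_neg
          rintro (h | h)
          · exact hij h
          · exact (Finset.mem_sdiff.mp h).2 his
        rw [e1, ← Finset.sum_erase_add _ _ his,
          show prof n j {i} i = w n (j:ℕ) from if_pos (Or.inr (Finset.mem_singleton_self i)),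
          Finset.sum_congr rfl (fun i' hi' => by
            rw [show prof n j {i'} i = 0 from if_neg (by
              rintro (h | h)
              · exact hij h
              · exact (Finset.mem_erase.mp hi').1 ((Finset.mem_singleton.mp h).symm))])]
        rw [Finset.sum_const, ← Nat.cast_smul_eq_nsmul ℝ≥0∞, smul_smul,
          show ((((smalls n G p m j).erase i)).card : ℝ≥0∞) * ENNReal.ofReal (cb n (j:ℕ))
            = ENNReal.ofReal ((((smalls n G p m j).erase i)).card * cb n (j:ℕ)) by
              rw [ENNReal.ofReal_mul (by positivity), ENNReal.ofReal_natCast]]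
        have hrec : Finset.card ((smalls n G p m j).erase i) = (smalls n G p m j).card - 1 :=
          Finset.card_erase_of_mem his
        have hc1 : 1 ≤ (smalls n G p m j).card := Finset.card_pos.mpr ⟨i, his⟩
        have hco : ENNReal.ofReal ((w n (j:ℕ))⁻¹ - cb n (j:ℕ))
            = ENNReal.ofReal (cb n (j:ℕ))
              + ENNReal.ofReal ((((smalls n G p m j).erase i)).card * cb n (j:ℕ))
              + ENNReal.ofReal (cres n G p m j) := by
          rw [← ENNReal.ofReal_add hcb (mul_nonneg (by positivity) hcb),
            ← ENNReal.ofReal_add (by positivity) hcres]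
          congr 1
          rw [cb, cres, hrec]
          have hcast : (((smalls n G p m j).card - 1 : ℕ) : ℝ)
              = ((smalls n G p m j).card : ℝ) - 1 := by
            push_cast [hc1]
            ring
          rw [hcast]
          push_cast
          ring
        rw [hco, add_smul, add_smul]
        abel
      · have hib : i ∈ big n G p m j := Finset.mem_sdiff.mpr ⟨hiN, his⟩
        have e1 : prof n j (big n G p m j) i = w n (j:ℕ) := if_pos (Or.inr hib)
        rw [e1, Finset.sum_congr rfl (fun i' hi' => by
          rw [show prof n j {i'} i = 0 from if_neg (by
            rintro (h | h)
            · exact hij h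
            · exact his ((Finset.mem_singleton.mp h) ▸ hi'))])]
        rw [Finset.sum_const, ← Nat.cast_smul_eq_nsmul ℝ≥0∞, smul_smul,
          show (((smalls n G p m j)).card : ℝ≥0∞) * ENNReal.ofReal (cb n (j:ℕ))
            = ENNReal.ofReal (((smalls n G p m j)).card * cb n (j:ℕ)) by
              rw [ENNReal.ofReal_mul (by positivity), ENNReal.ofReal_natCast]]
        have hco : ENNReal.ofReal ((w n (j:ℕ))⁻¹ - cb n (j:ℕ))
            = ENNReal.ofReal (((smalls n G p m j)).card * cb n (j:ℕ))
              + ENNReal.ofReal (cres n G p m j) := by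
          rw [← ENNReal.ofReal_add (mul_nonneg (by positivity) hcb) hcres]
          congr 1
          rw [cb, cres]
          push_cast
          ring
        rw [hco, add_smul]
        abel
    · rw [if_neg hiN, ezc, if_neg hij, if_neg hiN]
      have e1 : prof n j (big n G p m j) i = 0 := by
        apply if_neg
        rintro (h | h)
        · exact hij h
        · exact hiN (big_subset_Nb n G p m j h)
      rw [e1, Finset.sum_congr rfl (fun i' hi' => by
        rw [show prof n j {i'} i = 0 from if_neg (by
          rintro (h | h)
          · exact hij h
          · exact hiN (smalls_subset_Nb n G p m j ((Finset.mem_singleton.mp h) ▸ hi')))])]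
      rw [Finset.sum_const, ← Nat.cast_smul_eq_nsmul ℝ≥0∞, smul_smul,
        show (((smalls n G p m j)).card : ℝ≥0∞) * ENNReal.ofReal (cb n (j:ℕ))
          = ENNReal.ofReal (((smalls n G p m j)).card * cb n (j:ℕ)) by
            rw [ENNReal.ofReal_mul (by positivity), ENNReal.ofReal_natCast]]
      have hco : ENNReal.ofReal ((w n (j:ℕ))⁻¹)
          = ENNReal.ofReal (cb n (j:ℕ))
            + ENNReal.ofReal (((smalls n G p m j)).card * cb n (j:ℕ))
            + ENNReal.ofReal (cres n G p m j) := by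
        rw [← ENNReal.ofReal_add hcb (mul_nonneg (by positivity) hcb),
          ← ENNReal.ofReal_add (by positivity) hcres]
        congr 1
        rw [cb, cres]
        push_cast
        ring
      rw [hco, add_smul, add_smul]
      abel

lemma margG_eq (i : Fin n) :
    margG n G i =
      ENNReal.ofReal ((w n (i:ℕ))⁻¹) • Measure.dirac (w n (i:ℕ))
      + (∑ j : Fin n, if i < j ∧ G.Adj i j then
          ENNReal.ofReal ((w n (j:ℕ))⁻¹ / Real.sqrt n) • Measure.dirac (w n (j:ℕ)) else 0)
      + (1 - ENNReal.ofReal ((w n (i:ℕ))⁻¹)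
          - ∑ j : Fin n, if i < j ∧ G.Adj i j then
              ENNReal.ofReal ((w n (j:ℕ))⁻¹ / Real.sqrt n) else 0) • Measure.dirac (0:ℝ) := by
  rfl

lemma FF_map (hn : 0 < n) (hm : 0 < m) (hnm : n = m * m) (i : Fin n) :
    (FF n G p m).map (fun v => v i) = margG n G i := by
  have hev : Measurable (fun v : Fin n → ℝ => v i) := measurable_pi_apply i
  rw [FF, Measure.map_add _ _ hev, map_finset_sum _ _ hev, Measure.map_smul,
    Measure.map_dirac' hev, Finset.sum_congr rfl (fun j _ => blockM_map n G p m hm hnm i j),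
    Finset.sum_add_distrib, Finset.sum_add_distrib]
  have hA : (∑ j : Fin n, if i = j then
      ENNReal.ofReal ((w n (j:ℕ))⁻¹) • Measure.dirac (w n (j:ℕ)) else 0)
      = ENNReal.ofReal ((w n (i:ℕ))⁻¹) • Measure.dirac (w n (i:ℕ)) := by
    rw [Finset.sum_ite_eq Finset.univ i
      (fun j => ENNReal.ofReal ((w n (j:ℕ))⁻¹) • Measure.dirac (w n (j:ℕ))),
      if_pos (Finset.mem_univ i)]
  have hB : (∑ j : Fin n, if i ∈ Nb n G j then
      ENNReal.ofReal (cb n (j:ℕ)) • Measure.dirac (w n (j:ℕ)) else 0)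
      = ∑ j : Fin n, if i < j ∧ G.Adj i j then
          ENNReal.ofReal ((w n (j:ℕ))⁻¹ / Real.sqrt n) • Measure.dirac (w n (j:ℕ)) else 0 := by
    refine Finset.sum_congr rfl (fun j _ => ?_)
    refine if_congr (mem_Nb n G) ?_ rfl
    rw [cb, sf, div_eq_mul_inv]
  have hC : (∑ j : Fin n, ENNReal.ofReal (ezc n G i j) • Measure.dirac (0:ℝ))
      = (∑ j : Fin n, ENNReal.ofReal (ezc n G i j)) • Measure.dirac (0:ℝ) :=
    (Finset.sum_smul).symm
  rw [hA, hB, hC, add_assoc (_ + _), ← add_smul]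
  have hsum_nonneg : (0:ℝ) ≤ ∑ j : Fin n, ezc n G i j :=
    Finset.sum_nonneg (fun j _ => ezc_nonneg n G hm hnm i j)
  have hite_nonneg : (0:ℝ) ≤ ∑ j : Fin n,
      if i < j ∧ G.Adj i j then (w n (j:ℕ))⁻¹ / Real.sqrt n else 0 := by
    refine Finset.sum_nonneg (fun j _ => ?_)
    split
    · have := w_inv_nonneg n (j:ℕ)
      positivity
    · exact le_refl 0
  have hz : (∑ j : Fin n, ENNReal.ofReal (ezc n G i j)) + ENNReal.ofReal (zc n)
      = 1 - ENNReal.ofReal ((w n (i:ℕ))⁻¹)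
        - ∑ j : Fin n, if i < j ∧ G.Adj i j then
            ENNReal.ofReal ((w n (j:ℕ))⁻¹ / Real.sqrt n) else 0 := by
    rw [← ENNReal.ofReal_sum_of_nonneg (fun j _ => ezc_nonneg n G hm hnm i j),
      ← ENNReal.ofReal_add hsum_nonneg (zc_nonneg n hn)]
    have h1 : (∑ j : Fin n, if i < j ∧ G.Adj i j then
        ENNReal.ofReal ((w n (j:ℕ))⁻¹ / Real.sqrt n) else 0)
        = ENNReal.ofReal (∑ j : Fin n,
            if i < j ∧ G.Adj i j then (w n (j:ℕ))⁻¹ / Real.sqrt n else 0) := by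
      rw [ENNReal.ofReal_sum_of_nonneg]
      · refine Finset.sum_congr rfl (fun j _ => ?_)
        split
        · rfl
        · rw [ENNReal.ofReal_zero]
      · intro j _
        split
        · have := w_inv_nonneg n (j:ℕ)
          positivity
        · exact le_refl 0
    rw [h1, ← ENNReal.ofReal_one, ← ENNReal.ofReal_sub _ (w_inv_nonneg n (i:ℕ)),
      ← ENNReal.ofReal_sub _ hite_nonneg]
    congr 1
    -- real identity
    have hterm : ∀ j : Fin n, ezc n G i j
        = (w n (j:ℕ))⁻¹ - (if i < j ∧ G.Adj i j then (w n (j:ℕ))⁻¹ / Real.sqrt n else 0)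
          - (if i = j then (w n (j:ℕ))⁻¹ else 0) := by
      intro j
      rw [ezc]
      by_cases hij : i = j
      · have : ¬ (i < j ∧ G.Adj i j) := by
          rintro ⟨h1, _⟩
          exact absurd h1 (hij ▸ lt_irrefl i)
        rw [if_pos hij, if_neg this, if_pos hij]
        ring
      · rw [if_neg hij, if_neg hij]
        by_cases hiN : i ∈ Nb n G j
        · rw [if_pos hiN, if_pos ((mem_Nb n G).mp hiN), cb, sf]
          ring
        · rw [if_neg hiN, if_neg (fun h => hiN ((mem_Nb n G).mpr h))]
          ring
    rw [Finset.sum_congr rfl (fun j _ => hterm j), Finset.sum_sub_distrib,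
      Finset.sum_sub_distrib, Finset.sum_ite_eq Finset.univ i
        (fun j => (w n (j:ℕ))⁻¹), if_pos (Finset.mem_univ i), zc]
    ring
  rw [hz, margG_eq]

lemma FF_isProb (hn : 0 < n) (hm : 0 < m) (hnm : n = m * m) :
    IsProbabilityMeasure (FF n G p m) := by
  constructor
  have hblock : ∀ j : Fin n, blockM n G p m j Set.univ = ENNReal.ofReal ((w n (j:ℕ))⁻¹) := by
    intro j
    rw [blockM]
    simp only [Measure.add_apply, Measure.smul_apply, smul_eq_mul]
    have hd : ∀ x : Fin n → ℝ, Measure.dirac x (Set.univ : Set (Fin n → ℝ)) = 1 := by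
      intro x
      simp
    rw [hd, hd]
    have : (∑ i ∈ smalls n G p m j, ENNReal.ofReal (cb n (j:ℕ)) • Measure.dirac (prof n j {i}))
        (Set.univ : Set (Fin n → ℝ))
        = ∑ i ∈ smalls n G p m j, ENNReal.ofReal (cb n (j:ℕ)) := by
      rw [Measure.finset_sum_apply]
      refine Finset.sum_congr rfl (fun i _ => ?_)
      rw [Measure.smul_apply, hd, smul_eq_mul, mul_one]
    rw [this, Finset.sum_const, mul_one, ← Nat.cast_smul_eq_nsmul ℝ≥0∞, smul_eq_mul,
      show (((smalls n G p m j)).card : ℝ≥0∞) * ENNReal.ofReal (cb n (j:ℕ))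
        = ENNReal.ofReal (((smalls n G p m j)).card * cb n (j:ℕ)) by
          rw [ENNReal.ofReal_mul (by positivity), ENNReal.ofReal_natCast]]
    rw [mul_one, ← ENNReal.ofReal_add (cb_nonneg n _)
        (mul_nonneg (by positivity) (cb_nonneg n _)),
      ← ENNReal.ofReal_add (by have := cb_nonneg n (j:ℕ); positivity)
        (cres_nonneg n G p m hm hnm)]
    congr 1
    rw [cb, cres]
    push_cast
    ring
  rw [FF, Measure.add_apply, Measure.smul_apply, smul_eq_mul,
    show Measure.dirac (fun _ => (0:ℝ)) (Set.univ : Set (Fin n → ℝ)) = 1 by simp, mul_one,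
    Measure.finset_sum_apply,
    Finset.sum_congr rfl (fun j _ => hblock j),
    ← ENNReal.ofReal_sum_of_nonneg (s := Finset.univ)
      (f := fun j : Fin n => (w n (j:ℕ))⁻¹) (fun j _ => w_inv_nonneg n (j:ℕ)),
    ← ENNReal.ofReal_add (sum_w_inv_nonneg n) (zc_nonneg n hn), zc]
  norm_num

lemma FF_compatible (hn : 0 < n) (hm : 0 < m) (hnm : n = m * m) :
    Compatible (margG n G) (FF n G p m) :=
  ⟨FF_isProb n G p m hn hm hnm, fun i => FF_map n G p m hn hm hnm i⟩

/-! ### revenue bounds -/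

lemma rev_le_w (B : BuyerRule n) (j : Fin n) (S : Finset (Fin n)) :
    B.revenue p (prof n j S) ≤ ENNReal.ofReal (w n (j:ℕ)) := by
  rw [BuyerRule.revenue]
  rcases h : B.choose (prof n j S) p with _ | k
  · simp
  · simp only [Option.elim]
    obtain ⟨hk, hk2⟩ := B.feasible _ _ _ h
    have hv : prof n j S k ≤ w n (j:ℕ) := by
      rw [prof]; split
      · exact le_refl _
      · exact (w_pos n (j:ℕ)).le
    calc p k = ENNReal.ofReal (p k).toReal := (ENNReal.ofReal_toReal hk).symm
      _ ≤ ENNReal.ofReal (w n (j:ℕ)) := ENNReal.ofReal_le_ofReal (hk2.trans hv)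

lemma rev_le_of_mem (B : BuyerRule n) (j : Fin n) (S : Finset (Fin n))
    (i : Fin n) (hi : i = j ∨ i ∈ S) (hpi : p i ≠ ⊤) :
    B.revenue p (prof n j S) ≤ p i := by
  rw [BuyerRule.revenue]
  rcases h : B.choose (prof n j S) p with _ | k
  · simp
  · simp only [Option.elim]
    obtain ⟨hk, hk2⟩ := B.feasible _ _ _ h
    have hopt := B.optimal _ _ _ i h hpi
    have hvi : prof n j S i = w n (j:ℕ) := by rw [prof, if_pos hi]
    by_cases hvk : k = j ∨ k ∈ S
    · have hwk : prof n j S k = w n (j:ℕ) := by rw [prof, if_pos hvk]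
      rw [hvi] at hopt
      rw [hwk] at hk2 hopt
      have : (p k).toReal ≤ (p i).toReal := by linarith
      exact (ENNReal.toReal_le_toReal hk hpi).mp this
    · have hz : prof n j S k = 0 := by rw [prof, if_neg hvk]
      rw [hz] at hk2
      have h0 : (p k).toReal = 0 := le_antisymm hk2 ENNReal.toReal_nonneg
      have : p k = 0 := ((ENNReal.toReal_eq_zero_iff _).mp h0).resolve_right hk
      simp [this]

lemma rev_low_mem (B : BuyerRule n) (j : Fin n) (S : Finset (Fin n))
    (i : Fin n) (hi : i = j ∨ i ∈ S) (hlow : i ∈ low n p) :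
    B.revenue p (prof n j S) ≤ ENNReal.ofReal (w n (i:ℕ)) := by
  have hp := (mem_low n p).mp hlow
  have hne : p i ≠ ⊤ := by
    intro h
    rw [h] at hp
    exact absurd (top_le_iff.mp hp) (by simp)
  exact (rev_le_of_mem n p B j S i hi hne).trans hp

lemma rev_empty_bound (B : BuyerRule n) (j : Fin n) :
    B.revenue p (prof n j ∅) ≤ if j ∈ low n p then ENNReal.ofReal (w n (j:ℕ)) else 0 := by
  by_cases hj : j ∈ low n p
  · rw [if_pos hj]
    exact rev_le_w n p B j ∅
  · rw [if_neg hj]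
    rw [BuyerRule.revenue]
    rcases hc : B.choose (prof n j ∅) p with _ | k
    · simp
    · simp only [Option.elim]
      obtain ⟨hk, hk2⟩ := B.feasible _ _ _ hc
      by_cases hkj : k = j
      · exfalso
        apply hj
        rw [mem_low]
        subst hkj
        have hvk : prof n k ∅ k = w n (k:ℕ) := if_pos (Or.inl rfl)
        rw [hvk] at hk2
        calc p k = ENNReal.ofReal (p k).toReal := (ENNReal.ofReal_toReal hk).symm
          _ ≤ ENNReal.ofReal (w n (k:ℕ)) := ENNReal.ofReal_le_ofReal hk2
      · have hz : prof n j ∅ k = 0 := by rw [prof, if_neg (by simp [hkj])]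
        rw [hz] at hk2
        have h0 : (p k).toReal = 0 := le_antisymm hk2 ENNReal.toReal_nonneg
        have : p k = 0 := ((ENNReal.toReal_eq_zero_iff _).mp h0).resolve_right hk
        simp [this]

lemma rev_zero (B : BuyerRule n) : B.revenue p (fun _ => 0) = 0 := by
  rw [BuyerRule.revenue]
  rcases hc : B.choose (fun _ => 0) p with _ | k
  · simp
  · simp only [Option.elim]
    obtain ⟨hk, hk2⟩ := B.feasible _ _ _ hc
    have hk2' : (p k).toReal ≤ 0 := hk2
    have h0 : (p k).toReal = 0 := le_antisymm hk2' ENNReal.toReal_nonneg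
    exact ((ENNReal.toReal_eq_zero_iff _).mp h0).resolve_right hk

/-! ### combinatorics -/

lemma indep_of_degeneracy (k : ℕ) (T : Finset (Fin n))
    (hT : ∀ j ∈ T, ((T.filter (fun i => i < j ∧ G.Adj i j)).card ≤ k)) :
    ∃ S : Finset (Fin n), S ⊆ T ∧ (∀ a ∈ S, ∀ b ∈ S, ¬ G.Adj a b)
      ∧ T.card ≤ (k+1) * S.card := by
  induction T using Finset.strongInduction with
  | _ T ih =>
    rcases T.eq_empty_or_nonempty with rfl | hne
    · exact ⟨∅, by simp, by simp, by simp⟩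
    · set j := T.max' hne with hj
      have hjT : j ∈ T := T.max'_mem hne
      set R : Finset (Fin n) := T.filter (fun i => G.Adj i j ∨ i = j) with hR
      have hjR : j ∈ R := by
        rw [hR, Finset.mem_filter]
        exact ⟨hjT, Or.inr rfl⟩
      have hRsub : R ⊆ T := Finset.filter_subset _ _
      have hTR : T \ R ⊂ T := Finset.sdiff_ssubset hRsub ⟨j, hjR⟩
      have hT' : ∀ j' ∈ T \ R, (((T \ R).filter (fun i => i < j' ∧ G.Adj i j')).card ≤ k) := by
        intro j' hj'
        calc ((T \ R).filter (fun i => i < j' ∧ G.Adj i j')).card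
            ≤ (T.filter (fun i => i < j' ∧ G.Adj i j')).card :=
              Finset.card_le_card (Finset.filter_subset_filter _ Finset.sdiff_subset)
          _ ≤ k := hT j' (Finset.mem_sdiff.mp hj').1
      obtain ⟨S', hS'sub, hS'ind, hS'card⟩ := ih (T \ R) hTR hT'
      have hjS' : j ∉ S' := fun h => (Finset.mem_sdiff.mp (hS'sub h)).2 hjR
      refine ⟨insert j S', ?_, ?_, ?_⟩
      · intro a ha
        rcases Finset.mem_insert.mp ha with rfl | ha
        · exact hjT
        · exact Finset.sdiff_subset (hS'sub ha)
      · intro a ha b hb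
        rcases Finset.mem_insert.mp ha with rfl | ha <;>
          rcases Finset.mem_insert.mp hb with rfl | hb
        · exact G.irrefl
        · intro hadj
          have := (Finset.mem_sdiff.mp (hS'sub hb)).2
          rw [hR, Finset.mem_filter] at this
          exact this ⟨(Finset.mem_sdiff.mp (hS'sub hb)).1, Or.inl hadj.symm⟩
        · intro hadj
          have := (Finset.mem_sdiff.mp (hS'sub ha)).2
          rw [hR, Finset.mem_filter] at this
          exact this ⟨(Finset.mem_sdiff.mp (hS'sub ha)).1, Or.inl hadj⟩
        · exact hS'ind a ha b hb
      · have hRcard : R.card ≤ k + 1 := by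
          have hsub2 : R ⊆ insert j (T.filter (fun i => i < j ∧ G.Adj i j)) := by
            intro i hi
            rw [hR, Finset.mem_filter] at hi
            rcases hi.2 with hadj | rfl
            · refine Finset.mem_insert_of_mem (Finset.mem_filter.mpr ⟨hi.1, ?_, hadj⟩)
              exact lt_of_le_of_ne (T.le_max' i hi.1) (G.ne_of_adj hadj)
            · exact Finset.mem_insert_self _ _
          calc R.card ≤ (insert j (T.filter (fun i => i < j ∧ G.Adj i j))).card :=
                Finset.card_le_card hsub2
            _ ≤ (T.filter (fun i => i < j ∧ G.Adj i j)).card + 1 := Finset.card_insert_le _ _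
            _ ≤ k + 1 := by
                have := hT j hjT
                omega
        have hsplit : (T \ R).card + R.card = T.card := Finset.card_sdiff_add_card_eq_card hRsub
        rw [Finset.card_insert_of_notMem hjS']
        have : (k+1) * (S'.card + 1) = (k+1) * S'.card + (k+1) := by ring
        omega

lemma Tk_bound (M : Finset (Fin n))
    (hMmax : ∀ S : Finset (Fin n), (∀ i ∈ S, ∀ j ∈ S, ¬ G.Adj i j) → S.card ≤ M.card)
    (k : ℕ) :
    ((low n p).filter (fun j => (Lam n G p j).card ≤ k)).card ≤ (k+1) * M.card := by
  set T := (low n p).filter (fun j => (Lam n G p j).card ≤ k) with hTdef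
  have hT : ∀ j ∈ T, ((T.filter (fun i => i < j ∧ G.Adj i j)).card ≤ k) := by
    intro j hj
    rw [hTdef, Finset.mem_filter] at hj
    calc (T.filter (fun i => i < j ∧ G.Adj i j)).card
        ≤ (Lam n G p j).card := by
          apply Finset.card_le_card
          intro i hi
          rw [Finset.mem_filter] at hi
          rw [Lam, Finset.mem_inter, mem_Nb]
          refine ⟨hi.2, ?_⟩
          have := hi.1
          rw [hTdef, Finset.mem_filter] at this
          exact this.1
      _ ≤ k := hj.2
  obtain ⟨S, _, hSind, hScard⟩ := indep_of_degeneracy n G k T hT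
  calc T.card ≤ (k+1) * S.card := hScard
    _ ≤ (k+1) * M.card := Nat.mul_le_mul_left _ (hMmax S hSind)

lemma main_count (M : Finset (Fin n))
    (hMmax : ∀ S : Finset (Fin n), (∀ i ∈ S, ∀ j ∈ S, ¬ G.Adj i j) → S.card ≤ M.card) :
    ∑ j ∈ low n p, (m - min (Lam n G p j).card m) ≤ M.card * (m * m) := by
  have hcount : ∀ j : Fin n, m - min (Lam n G p j).card m
      = ∑ k ∈ Finset.range m, (if (Lam n G p j).card ≤ k then 1 else 0) := by
    intro j
    rw [Finset.sum_boole]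
    push_cast
    rw [show (Finset.range m).filter (fun k => (Lam n G p j).card ≤ k)
        = Finset.Ico (min (Lam n G p j).card m) m by
      ext k
      simp only [Finset.mem_filter, Finset.mem_range, Finset.mem_Ico]
      omega]
    rw [Nat.card_Ico]
  calc ∑ j ∈ low n p, (m - min (Lam n G p j).card m)
      = ∑ j ∈ low n p, ∑ k ∈ Finset.range m,
          (if (Lam n G p j).card ≤ k then 1 else 0) :=
        Finset.sum_congr rfl (fun j _ => hcount j)
    _ = ∑ k ∈ Finset.range m, ∑ j ∈ low n p,
          (if (Lam n G p j).card ≤ k then 1 else 0) := Finset.sum_comm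
    _ = ∑ k ∈ Finset.range m,
          ((low n p).filter (fun j => (Lam n G p j).card ≤ k)).card := by
        refine Finset.sum_congr rfl (fun k _ => ?_)
        rw [Finset.sum_boole]
        push_cast
        rfl
    _ ≤ ∑ k ∈ Finset.range m, (k+1) * M.card :=
        Finset.sum_le_sum (fun k _ => Tk_bound n G p M hMmax k)
    _ ≤ ∑ k ∈ Finset.range m, m * M.card := by
        refine Finset.sum_le_sum (fun k hk => ?_)
        have := Finset.mem_range.mp hk
        exact Nat.mul_le_mul_right _ (by omega)
    _ = m * (m * M.card) := by rw [Finset.sum_const, Finset.card_range, smul_eq_mul]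
    _ = M.card * (m * m) := by ring

/-! ### expected revenue -/

lemma expRev_FF (B : BuyerRule n) :
    expRev B p (FF n G p m)
      = (∑ j : Fin n,
          (ENNReal.ofReal (cb n (j:ℕ)) * B.revenue p (prof n j (big n G p m j))
           + ∑ i ∈ smalls n G p m j,
               ENNReal.ofReal (cb n (j:ℕ)) * B.revenue p (prof n j {i})
           + ENNReal.ofReal (cres n G p m j) * B.revenue p (prof n j ∅)))
        + ENNReal.ofReal (zc n) * B.revenue p (fun _ => 0) := by
  rw [expRev, FF, lintegral_add_measure, lintegral_finset_sum_measure,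
    lintegral_smul_measure, lintegral_dirac]
  congr 1
  refine Finset.sum_congr rfl (fun j _ => ?_)
  rw [blockM, lintegral_add_measure, lintegral_add_measure, lintegral_smul_measure,
    lintegral_dirac, lintegral_smul_measure, lintegral_dirac, lintegral_finset_sum_measure]
  congr 2
  refine Finset.sum_congr rfl (fun i _ => ?_)
  rw [lintegral_smul_measure, lintegral_dirac, smul_eq_mul]

/-- real-valued per-block bound -/
def BB (j : Fin n) : ℝ :=
  (if (Lam' n G p m j).Nonempty then 0 else sf n) + 2 * ((2:ℝ)^n)⁻¹
    + (if j ∈ low n p then 1 - (min (Lam n G p j).card m : ℕ) * sf n else 0)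

lemma BB_nonneg (hm : 0 < m) (hnm : n = m * m) (j : Fin n) : 0 ≤ BB n G p m j := by
  have h1 : (0:ℝ) ≤ (if (Lam' n G p m j).Nonempty then 0 else sf n) := by
    split
    · exact le_refl 0
    · exact sf_nonneg n
  have h2 : (0:ℝ) ≤ 2 * ((2:ℝ)^n)⁻¹ := by positivity
  have h3 : (0:ℝ) ≤ (if j ∈ low n p then 1 - (min (Lam n G p j).card m : ℕ) * sf n else 0) := by
    split
    · have hle : ((min (Lam n G p j).card m : ℕ) : ℝ) ≤ (m : ℝ) := by
        exact_mod_cast min_le_right _ _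
      have := m_sf n hm hnm
      nlinarith [sf_nonneg n]
    · exact le_refl 0
  rw [BB]
  linarith

lemma block_bound (hm : 0 < m) (hnm : n = m * m) (B : BuyerRule n) (j : Fin n) :
    ENNReal.ofReal (cb n (j:ℕ)) * B.revenue p (prof n j (big n G p m j))
      + ∑ i ∈ smalls n G p m j, ENNReal.ofReal (cb n (j:ℕ)) * B.revenue p (prof n j {i})
      + ENNReal.ofReal (cres n G p m j) * B.revenue p (prof n j ∅)
    ≤ ENNReal.ofReal (BB n G p m j) := by
  have hwj := w_pos n (j:ℕ)
  have hsf := sf_nonneg n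
  have hsf1 := sf_le_one n hm hnm
  -- term 1
  have t1 : ENNReal.ofReal (cb n (j:ℕ)) * B.revenue p (prof n j (big n G p m j))
      ≤ ENNReal.ofReal ((if (Lam' n G p m j).Nonempty then 0 else sf n) + ((2:ℝ)^n)⁻¹) := by
    by_cases hne : (Lam' n G p m j).Nonempty
    · rw [if_pos hne, zero_add]
      have hfb : fst n G p m j ∈ big n G p m j := fst_mem_big n G p m j hne
      have hrev : B.revenue p (prof n j (big n G p m j))
          ≤ ENNReal.ofReal (w n ((fst n G p m j):ℕ)) :=
        rev_low_mem n p B j _ _ (Or.inr hfb) (fst_low n G p m j hne)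
      have hlt : fst n G p m j < j := ((mem_Nb n G).mp (big_subset_Nb n G p m j hfb)).1
      have hwle : w n ((fst n G p m j):ℕ) ≤ w n (j:ℕ) * ((2:ℝ)^n)⁻¹ := w_le n hlt
      calc ENNReal.ofReal (cb n (j:ℕ)) * B.revenue p (prof n j (big n G p m j))
          ≤ ENNReal.ofReal (cb n (j:ℕ)) * ENNReal.ofReal (w n (j:ℕ) * ((2:ℝ)^n)⁻¹) := by
            exact mul_le_mul_right (hrev.trans (ENNReal.ofReal_le_ofReal hwle)) _
        _ = ENNReal.ofReal (cb n (j:ℕ) * (w n (j:ℕ) * ((2:ℝ)^n)⁻¹)) :=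
            (ENNReal.ofReal_mul (cb_nonneg n _)).symm
        _ ≤ ENNReal.ofReal (((2:ℝ)^n)⁻¹) := by
            apply ENNReal.ofReal_le_ofReal
            rw [cb]
            rw [show (w n (j:ℕ))⁻¹ * sf n * (w n (j:ℕ) * ((2:ℝ)^n)⁻¹)
                = sf n * ((2:ℝ)^n)⁻¹ * ((w n (j:ℕ))⁻¹ * w n (j:ℕ)) by ring,
              inv_mul_cancel₀ hwj.ne', mul_one]
            have h2 : (0:ℝ) ≤ ((2:ℝ)^n)⁻¹ := by positivity
            nlinarith
    · rw [if_neg hne]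
      calc ENNReal.ofReal (cb n (j:ℕ)) * B.revenue p (prof n j (big n G p m j))
          ≤ ENNReal.ofReal (cb n (j:ℕ)) * ENNReal.ofReal (w n (j:ℕ)) :=
            mul_le_mul_right (rev_le_w n p B j _) _
        _ = ENNReal.ofReal (cb n (j:ℕ) * w n (j:ℕ)) := (ENNReal.ofReal_mul (cb_nonneg n _)).symm
        _ = ENNReal.ofReal (sf n) := by
            rw [cb, show (w n (j:ℕ))⁻¹ * sf n * w n (j:ℕ)
              = sf n * ((w n (j:ℕ))⁻¹ * w n (j:ℕ)) by ring, inv_mul_cancel₀ hwj.ne', mul_one]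
        _ ≤ ENNReal.ofReal (sf n + ((2:ℝ)^n)⁻¹) := by
            apply ENNReal.ofReal_le_ofReal
            have h2 : (0:ℝ) ≤ ((2:ℝ)^n)⁻¹ := by positivity
            linarith
  -- term 2
  have t2 : ∑ i ∈ smalls n G p m j, ENNReal.ofReal (cb n (j:ℕ)) * B.revenue p (prof n j {i})
      ≤ ENNReal.ofReal (((2:ℝ)^n)⁻¹) := by
    have hterm : ∀ i ∈ smalls n G p m j,
        ENNReal.ofReal (cb n (j:ℕ)) * B.revenue p (prof n j {i})
        ≤ ENNReal.ofReal (sf n * ((2:ℝ)^n)⁻¹) := by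
      intro i hi
      have hiL : i ∈ Lam n G p j := smalls_subset n G p m j hi
      have hilow : i ∈ low n p := (Finset.mem_inter.mp hiL).2
      have hiNb : i ∈ Nb n G j := (Finset.mem_inter.mp hiL).1
      have hilt : i < j := ((mem_Nb n G).mp hiNb).1
      have hrev : B.revenue p (prof n j {i}) ≤ ENNReal.ofReal (w n (i:ℕ)) :=
        rev_low_mem n p B j _ i (Or.inr (Finset.mem_singleton_self i)) hilow
      calc ENNReal.ofReal (cb n (j:ℕ)) * B.revenue p (prof n j {i})
          ≤ ENNReal.ofReal (cb n (j:ℕ)) * ENNReal.ofReal (w n (j:ℕ) * ((2:ℝ)^n)⁻¹) :=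
            mul_le_mul_right (hrev.trans (ENNReal.ofReal_le_ofReal (w_le n hilt))) _
        _ = ENNReal.ofReal (cb n (j:ℕ) * (w n (j:ℕ) * ((2:ℝ)^n)⁻¹)) :=
            (ENNReal.ofReal_mul (cb_nonneg n _)).symm
        _ = ENNReal.ofReal (sf n * ((2:ℝ)^n)⁻¹) := by
            rw [cb, show (w n (j:ℕ))⁻¹ * sf n * (w n (j:ℕ) * ((2:ℝ)^n)⁻¹)
                = sf n * ((2:ℝ)^n)⁻¹ * ((w n (j:ℕ))⁻¹ * w n (j:ℕ)) by ring,
              inv_mul_cancel₀ hwj.ne', mul_one]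
    calc ∑ i ∈ smalls n G p m j, ENNReal.ofReal (cb n (j:ℕ)) * B.revenue p (prof n j {i})
        ≤ ∑ _i ∈ smalls n G p m j, ENNReal.ofReal (sf n * ((2:ℝ)^n)⁻¹) :=
          Finset.sum_le_sum hterm
      _ = ((smalls n G p m j).card : ℝ≥0∞) * ENNReal.ofReal (sf n * ((2:ℝ)^n)⁻¹) := by
          rw [Finset.sum_const, ← Nat.cast_smul_eq_nsmul ℝ≥0∞, smul_eq_mul]
      _ = ENNReal.ofReal (((smalls n G p m j).card : ℝ)) * ENNReal.ofReal (sf n * ((2:ℝ)^n)⁻¹) := by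
          rw [ENNReal.ofReal_natCast (smalls n G p m j).card]
      _ = ENNReal.ofReal (((smalls n G p m j).card : ℝ) * (sf n * ((2:ℝ)^n)⁻¹)) :=
          (ENNReal.ofReal_mul (by positivity)).symm
      _ ≤ ENNReal.ofReal (((2:ℝ)^n)⁻¹) := by
          apply ENNReal.ofReal_le_ofReal
          have hcard : ((smalls n G p m j).card : ℝ) ≤ (m:ℝ) := by
            have := smalls_card_lt n G p m hm j
            exact_mod_cast (by omega : (smalls n G p m j).card ≤ m)
          have hmsf := m_sf n hm hnm
          have h2 : (0:ℝ) ≤ ((2:ℝ)^n)⁻¹ := by positivity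
          have h3 : ((smalls n G p m j).card : ℝ) * sf n ≤ 1 := by nlinarith [sf_nonneg n]
          calc ((smalls n G p m j).card : ℝ) * (sf n * ((2:ℝ)^n)⁻¹)
              = (((smalls n G p m j).card : ℝ) * sf n) * ((2:ℝ)^n)⁻¹ := by ring
            _ ≤ 1 * ((2:ℝ)^n)⁻¹ := mul_le_mul_of_nonneg_right h3 h2
            _ = ((2:ℝ)^n)⁻¹ := one_mul _
  -- term 3
  have t3 : ENNReal.ofReal (cres n G p m j) * B.revenue p (prof n j ∅)
      ≤ ENNReal.ofReal
          (if j ∈ low n p then 1 - (min (Lam n G p j).card m : ℕ) * sf n else 0) := by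
    by_cases hj : j ∈ low n p
    · rw [if_pos hj]
      calc ENNReal.ofReal (cres n G p m j) * B.revenue p (prof n j ∅)
          ≤ ENNReal.ofReal (cres n G p m j) * ENNReal.ofReal (w n (j:ℕ)) := by
            refine mul_le_mul_right ((rev_empty_bound n p B j).trans ?_) _
            rw [if_pos hj]
        _ = ENNReal.ofReal (cres n G p m j * w n (j:ℕ)) :=
            (ENNReal.ofReal_mul (cres_nonneg n G p m hm hnm)).symm
        _ ≤ ENNReal.ofReal (1 - (min (Lam n G p j).card m : ℕ) * sf n) := by
            apply ENNReal.ofReal_le_ofReal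
            rw [cres, show (w n (j:ℕ))⁻¹ * (1 - ((smalls n G p m j).card + 1) * sf n) * w n (j:ℕ)
              = (1 - ((smalls n G p m j).card + 1) * sf n) * ((w n (j:ℕ))⁻¹ * w n (j:ℕ)) by ring,
              inv_mul_cancel₀ hwj.ne', mul_one]
            have hmin : ((min (Lam n G p j).card m : ℕ) : ℝ) ≤ ((smalls n G p m j).card : ℝ) + 1 := by
              rcases (Lam' n G p m j).eq_empty_or_nonempty with he | hne
              · have : (Lam' n G p m j).card = 0 := by rw [he]; rfl
                rw [Lam'_card] at this
                rw [this]
                push_cast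
                positivity
              · have h1 : fst n G p m j ∈ Lam' n G p m j := by
                  rw [fst, dif_pos hne]; exact Finset.min'_mem _ hne
                have h2 : (smalls n G p m j).card = (Lam' n G p m j).card - 1 := by
                  rw [smalls, Finset.card_erase_of_mem h1]
                have h3 : 1 ≤ (Lam' n G p m j).card := Finset.card_pos.mpr hne
                have h4 := Lam'_card n G p m j
                have : min (Lam n G p j).card m ≤ (smalls n G p m j).card + 1 := by omega
                exact_mod_cast this
            nlinarith [sf_nonneg n]
    · rw [if_neg hj]
      have := rev_empty_bound n p B j
      rw [if_neg hj] at this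
      calc ENNReal.ofReal (cres n G p m j) * B.revenue p (prof n j ∅)
          ≤ ENNReal.ofReal (cres n G p m j) * 0 := mul_le_mul_right this _
        _ = 0 := mul_zero _
        _ ≤ _ := zero_le
  calc ENNReal.ofReal (cb n (j:ℕ)) * B.revenue p (prof n j (big n G p m j))
      + ∑ i ∈ smalls n G p m j, ENNReal.ofReal (cb n (j:ℕ)) * B.revenue p (prof n j {i})
      + ENNReal.ofReal (cres n G p m j) * B.revenue p (prof n j ∅)
      ≤ ENNReal.ofReal ((if (Lam' n G p m j).Nonempty then 0 else sf n) + ((2:ℝ)^n)⁻¹)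
        + ENNReal.ofReal (((2:ℝ)^n)⁻¹)
        + ENNReal.ofReal
            (if j ∈ low n p then 1 - (min (Lam n G p j).card m : ℕ) * sf n else 0) :=
        add_le_add (add_le_add t1 t2) t3
    _ = ENNReal.ofReal (BB n G p m j) := by
        have e1 : (0:ℝ) ≤ (if (Lam' n G p m j).Nonempty then 0 else sf n) := by
          split
          · exact le_refl 0
          · exact sf_nonneg n
        have e2 : (0:ℝ) ≤ ((2:ℝ)^n)⁻¹ := by positivity
        rw [← ENNReal.ofReal_add (by linarith) e2, ← ENNReal.ofReal_add (by linarith) ?h3]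
        · congr 1
          rw [BB]
          ring
        · split
          · have hle : ((min (Lam n G p j).card m : ℕ) : ℝ) ≤ (m : ℝ) := by
              exact_mod_cast min_le_right _ _
            have := m_sf n hm hnm
            nlinarith [sf_nonneg n]
          · exact le_refl 0

lemma sum_BB (hn : 0 < n) (hm : 0 < m) (hnm : n = m * m) (M : Finset (Fin n))
    (hMmax : ∀ S : Finset (Fin n), (∀ i ∈ S, ∀ j ∈ S, ¬ G.Adj i j) → S.card ≤ M.card) :
    ∑ j : Fin n, BB n G p m j ≤ ((M.card:ℝ) + 2) * (m:ℝ) + 3 * n * ((2:ℝ)^n)⁻¹ := by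
  have hmsf := m_sf n hm hnm
  have hsf := sf_nonneg n
  have h2 : (0:ℝ) ≤ ((2:ℝ)^n)⁻¹ := by positivity
  have hncast : (n:ℝ) = (m:ℝ) * (m:ℝ) := by exact_mod_cast congrArg (Nat.cast (R := ℝ)) hnm
  have hS1 : ∑ j : Fin n, (if (Lam' n G p m j).Nonempty then (0:ℝ) else sf n) ≤ (m:ℝ) := by
    calc ∑ j : Fin n, (if (Lam' n G p m j).Nonempty then (0:ℝ) else sf n)
        ≤ ∑ _j : Fin n, sf n := by
          refine Finset.sum_le_sum (fun j _ => ?_)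
          split
          · exact hsf
          · exact le_refl _
      _ = (n:ℝ) * sf n := by rw [Finset.sum_const, Finset.card_univ, Fintype.card_fin,
            nsmul_eq_mul]
      _ = (m:ℝ) := by rw [hncast]; nlinarith
  have hS2 : ∑ _j : Fin n, 2 * ((2:ℝ)^n)⁻¹ = 2 * n * ((2:ℝ)^n)⁻¹ := by
    rw [Finset.sum_const, Finset.card_univ, Fintype.card_fin, nsmul_eq_mul]
    ring
  have hS3 : ∑ j : Fin n,
      (if j ∈ low n p then 1 - ((min (Lam n G p j).card m : ℕ):ℝ) * sf n else 0)
      ≤ (M.card : ℝ) * (m:ℝ) := by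
    have e1 : ∑ j : Fin n,
        (if j ∈ low n p then 1 - ((min (Lam n G p j).card m : ℕ):ℝ) * sf n else 0)
        = ∑ j ∈ low n p, (1 - ((min (Lam n G p j).card m : ℕ):ℝ) * sf n) := by
      rw [Finset.sum_ite_mem, Finset.univ_inter]
    have e2 : ∀ j : Fin n, 1 - ((min (Lam n G p j).card m : ℕ):ℝ) * sf n
        = ((m - min (Lam n G p j).card m : ℕ) : ℝ) * sf n := by
      intro j
      rw [Nat.cast_sub (min_le_right _ _)]
      push_cast
      nlinarith
    rw [e1, Finset.sum_congr rfl (fun j _ => e2 j), ← Finset.sum_mul, ← Nat.cast_sum]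
    have hcount := main_count n G p m M hMmax
    calc ((∑ j ∈ low n p, (m - min (Lam n G p j).card m) : ℕ) : ℝ) * sf n
        ≤ ((M.card * (m * m) : ℕ) : ℝ) * sf n := by
          apply mul_le_mul_of_nonneg_right _ hsf
          exact_mod_cast hcount
      _ = (M.card : ℝ) * (m:ℝ) := by
          push_cast
          linear_combination ((M.card:ℝ) * (m:ℝ)) * hmsf
  have hsplit : ∑ j : Fin n, BB n G p m j
      = ∑ j : Fin n, (if (Lam' n G p m j).Nonempty then (0:ℝ) else sf n)
        + ∑ _j : Fin n, 2 * ((2:ℝ)^n)⁻¹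
        + ∑ j : Fin n,
            (if j ∈ low n p then 1 - ((min (Lam n G p j).card m : ℕ):ℝ) * sf n else 0) := by
    rw [← Finset.sum_add_distrib, ← Finset.sum_add_distrib]
    exact Finset.sum_congr rfl (fun j _ => by rw [BB])
  rw [hsplit, hS2]
  have hm' : (1:ℝ) ≤ (m:ℝ) := by exact_mod_cast hm
  have hM0 : (0:ℝ) ≤ (M.card : ℝ) := Nat.cast_nonneg _
  have hn0 : (0:ℝ) ≤ (n : ℝ) := Nat.cast_nonneg _
  nlinarith [hS1, hS3]

end RobAux

/-- If `M` is a maximum independent set of the graph `G`, then for the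
hardness instance with marginals `F_i(G)`, the optimal robust revenue guarantee satisfies
`R*(G) ≤ (|M| + 2)·√n + 3n·2^(−n)`. -/
theorem max_independent_set_gives_robust_revenue_upper_bound
    (n : ℕ) (hn : 0 < n) (hsq : ∃ m : ℕ, n = m * m)
    (G : SimpleGraph (Fin n)) [DecidableRel G.Adj]
    (B : BuyerRule n)
    (M : Finset (Fin n)) (hM : ∀ i ∈ M, ∀ j ∈ M, ¬ G.Adj i j)
    (hMmax : ∀ S : Finset (Fin n), (∀ i ∈ S, ∀ j ∈ S, ¬ G.Adj i j) → S.card ≤ M.card) :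
    optRobust B (margG n G) ≤
      ENNReal.ofReal ((M.card + 2) * Real.sqrt n + 3 * n * ((2 : ℝ) ^ n)⁻¹) := by
  obtain ⟨m, hnm⟩ := hsq
  have hm : 0 < m := by
    rcases Nat.eq_zero_or_pos m with rfl | h
    · omega
    · exact h
  rw [optRobust]
  refine iSup_le fun p => ?_
  have h1 : robustRev B (margG n G) p ≤ expRev B p (RobAux.FF n G p m) := by
    rw [robustRev]
    exact iInf₂_le _ (RobAux.FF_compatible n G p m hn hm hnm)
  refine h1.trans ?_
  rw [RobAux.expRev_FF n G p m B, RobAux.rev_zero n p B, mul_zero, add_zero]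
  calc (∑ j : Fin n,
        (ENNReal.ofReal (RobAux.cb n (j:ℕ))
            * B.revenue p (RobAux.prof n j (RobAux.big n G p m j))
         + ∑ i ∈ RobAux.smalls n G p m j,
             ENNReal.ofReal (RobAux.cb n (j:ℕ)) * B.revenue p (RobAux.prof n j {i})
         + ENNReal.ofReal (RobAux.cres n G p m j) * B.revenue p (RobAux.prof n j ∅)))
      ≤ ∑ j : Fin n, ENNReal.ofReal (RobAux.BB n G p m j) :=
        Finset.sum_le_sum (fun j _ => RobAux.block_bound n G p m hm hnm B j)
    _ = ENNReal.ofReal (∑ j : Fin n, RobAux.BB n G p m j) :=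
        (ENNReal.ofReal_sum_of_nonneg (fun j _ => RobAux.BB_nonneg n G p m hm hnm j)).symm
    _ ≤ ENNReal.ofReal ((M.card + 2) * Real.sqrt n + 3 * n * ((2 : ℝ) ^ n)⁻¹) := by
        apply ENNReal.ofReal_le_ofReal
        rw [RobAux.sqrt_n n hnm]
        exact RobAux.sum_BB n G p m hn hm hnm M hMmax
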